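/- Let p ∈ (2,3) and ρ > 0. The functional I(u) = ½∫_{R³}|∇u|² dx + ¼∫_{R³} ϕ_u u² dx − (1/p)∫_{R³}|u|^p dx is bounded from below and coercive on the constraint M_ρ = {u ∈ H^1(R³) : ∫ u² = ρ²}; i.e., there is m ∈ R with I(u) ≥ m for all u ∈ M_ρ, and I(u_n) → +∞ whenever ‖u_n‖_{H^1} → ∞ with u_n ∈ M_ρ. -/

import Mathlib

open MeasureTheory Real Filter

noncomputable section

abbrev E3 := EuclideanSpace ℝ (Fin 3)

/-- Membership in `H¹(ℝ³)`. -/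
def InH1 (u : E3 → ℝ) : Prop :=
  Differentiable ℝ u ∧ MemLp u 2 volume ∧
    MemLp (fun x => ‖fderiv ℝ u x‖) 2 volume

/-- The Schrödinger–Poisson energy on `ℝ³`, with the Newtonian-potential
(nonlocal) term written as a double integral
`∫ ϕ_u u² = ∫∫ (4π|x-y|)⁻¹ u²(x)u²(y)`. -/
def Ifull (p : ℝ) (u : E3 → ℝ) : ℝ :=
  (1 / 2) * (∫ x, ‖fderiv ℝ u x‖ ^ 2) +
    (1 / 4) * (∫ x, ∫ y, (4 * π * ‖x - y‖)⁻¹ * (u x) ^ 2 * (u y) ^ 2) -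
    (1 / p) * (∫ x, |u x| ^ p)


open scoped ENNReal

set_option maxHeartbeats 1000000

namespace SP7aux

abbrev P3 := Fin 3 → ℝ

noncomputable def Wfun (v : P3 → ℝ) (y : P3) : ℝ≥0∞ :=
  ENNReal.ofReal ((v y) ^ 2 + 2 * (|v y| * ‖fderiv ℝ v y‖))

lemma Wfun_measurable {v : P3 → ℝ} (hv : Differentiable ℝ v) : Measurable (Wfun v) := by
  have h1 : Measurable v := hv.continuous.measurable
  have h2 : Measurable fun y => ‖fderiv ℝ v y‖ := (measurable_fderiv ℝ v).norm
  exact ENNReal.measurable_ofReal.comp (((h1.pow_const 2).add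
    ((h1.abs.mul h2).const_mul 2)))

lemma oneD {w w' : ℝ → ℝ} (hw : ∀ t, HasDerivAt w (w' t) t)
    (h0 : ∀ t, 0 ≤ w t) (hm : Measurable w') (a : ℝ) :
    ENNReal.ofReal (w a) ≤ ∫⁻ t, ENNReal.ofReal (w t + |w' t|) := by
  classical
  have hwd : Differentiable ℝ w := fun t => (hw t).differentiableAt
  have hwc : Continuous w := hwd.continuous
  set I : Set ℝ := Set.Icc (a - 1) a with hI
  have hIvol : volume I = 1 := by
    simp [hI, Real.volume_Icc]
  have hle : (∫⁻ t in I, ENNReal.ofReal (w t + |w' t|)) ≤ ∫⁻ t, ENNReal.ofReal (w t + |w' t|) :=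
    setLIntegral_le_lintegral _ _
  rcases eq_or_ne (∫⁻ t in I, ENNReal.ofReal (w t + |w' t|)) ∞ with htop | hfin
  · rw [htop] at hle; exact le_trans le_top hle
  -- finite case
  have hmeas : Measurable fun t => w t + |w' t| := hwc.measurable.add hm.abs
  have hnn : ∀ t, 0 ≤ w t + |w' t| := fun t => add_nonneg (h0 t) (abs_nonneg _)
  have hsum_int : IntegrableOn (fun t => w t + |w' t|) I := by
    refine ⟨hmeas.aestronglyMeasurable.restrict, ?_⟩
    rw [hasFiniteIntegral_iff_ofReal (Filter.Eventually.of_forall fun t => hnn t)]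
    exact lt_top_iff_ne_top.2 hfin
  have hw_int : IntegrableOn w I := by
    refine Integrable.mono hsum_int (hwc.measurable.aestronglyMeasurable.restrict) ?_
    refine Filter.Eventually.of_forall fun t => ?_
    rw [Real.norm_eq_abs, Real.norm_eq_abs, abs_of_nonneg (h0 t), abs_of_nonneg (hnn t)]
    exact le_add_of_nonneg_right (abs_nonneg _)
  have hw'_int : IntegrableOn w' I := by
    refine Integrable.mono hsum_int (hm.aestronglyMeasurable.restrict) ?_
    refine Filter.Eventually.of_forall fun t => ?_
    rw [Real.norm_eq_abs, Real.norm_eq_abs, abs_of_nonneg (hnn t)]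
    exact le_add_of_nonneg_left (h0 t)
  set D : ℝ := ∫ t in I, |w' t| with hD
  have key : ∀ t ∈ I, w a ≤ w t + D := by
    intro t ht
    have hta : t ≤ a := ht.2
    have huIcc : Set.uIcc t a ⊆ I := by
      rw [Set.uIcc_of_le hta]
      exact Set.Icc_subset_Icc ht.1 le_rfl
    have hII : IntervalIntegrable w' volume t a :=
      (hw'_int.mono_set huIcc).intervalIntegrable
    have hftc : ∫ s in t..a, w' s = w a - w t :=
      intervalIntegral.integral_eq_sub_of_hasDerivAt (fun s _ => hw s) hII
    have h1 : ∫ s in t..a, w' s ≤ D := by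
      have h2 : |∫ s in t..a, w' s| ≤ ∫ s in t..a, |w' s| :=
        intervalIntegral.abs_integral_le_integral_abs hta
      have h3 : ∫ s in t..a, |w' s| = ∫ s in Set.Ioc t a, |w' s| :=
        intervalIntegral.integral_of_le hta
      have h4 : ∫ s in Set.Ioc t a, |w' s| ≤ D := by
        refine setIntegral_mono_set hw'_int.abs ?_ ?_
        · exact Filter.Eventually.of_forall fun s => abs_nonneg _
        · refine HasSubset.Subset.eventuallyLE ?_
          exact fun s hs => ⟨by linarith [ht.1, hs.1], hs.2⟩
      calc ∫ s in t..a, w' s ≤ |∫ s in t..a, w' s| := le_abs_self _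
        _ ≤ ∫ s in t..a, |w' s| := h2
        _ ≤ D := by rw [h3]; exact h4
    linarith [hftc ▸ h1]
  have havg : w a ≤ ∫ t in I, (w t + |w' t|) := by
    have hconst : ∫ t in I, w a = w a := by
      rw [setIntegral_const]
      simp [measureReal_def, hIvol]
    have hmono : ∫ t in I, w a ≤ ∫ t in I, (w t + D) := by
      refine setIntegral_mono_on (integrableOn_const (lt_top_iff_ne_top.1 ?_)) (hw_int.add (integrableOn_const (lt_top_iff_ne_top.1 ?_))) measurableSet_Icc key
      · rw [hIvol]; exact ENNReal.one_lt_top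
      · rw [hIvol]; exact ENNReal.one_lt_top
    have hsplit : ∫ t in I, (w t + D) = (∫ t in I, w t) + D := by
      rw [integral_add hw_int (integrableOn_const (by rw [hIvol]; exact ENNReal.one_ne_top))]
      congr 1
      rw [setIntegral_const]
      simp [measureReal_def, hIvol]
    have hsplit2 : ∫ t in I, (w t + |w' t|) = (∫ t in I, w t) + D :=
      integral_add hw_int hw'_int.abs
    linarith [hconst ▸ hmono, hsplit, hsplit2]
  calc ENNReal.ofReal (w a) ≤ ENNReal.ofReal (∫ t in I, (w t + |w' t|)) :=
        ENNReal.ofReal_le_ofReal havg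
    _ = ∫⁻ t in I, ENNReal.ofReal (w t + |w' t|) :=
        ofReal_integral_eq_lintegral_ofReal hsum_int (Filter.Eventually.of_forall fun t => hnn t)
    _ ≤ _ := hle

lemma sliceIneq {v : P3 → ℝ} (hv : Differentiable ℝ v) (x : P3) (i : Fin 3) :
    ENNReal.ofReal ((v x) ^ 2) ≤ ∫⁻ t, Wfun v (Function.update x i t) := by
  classical
  set φ : ℝ → ℝ := fun t => v (Function.update x i t) with hφdef
  set φ' : ℝ → ℝ := fun t => fderiv ℝ v (Function.update x i t) (Pi.single i 1) with hφ'def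
  have hφ : ∀ t, HasDerivAt φ (φ' t) t := fun t =>
    (hv (Function.update x i t)).hasFDerivAt.comp_hasDerivAt t (hasDerivAt_update x i t)
  have hw : ∀ t, HasDerivAt (fun t => φ t ^ 2) (2 * φ t * φ' t) t := by
    intro t
    simpa using ((hφ t).fun_pow 2)
  have hw'm : Measurable fun t => 2 * φ t * φ' t := by
    have h1 : Measurable φ := by
      have : Continuous φ := hv.continuous.comp (continuous_const.update i continuous_id)
      exact this.measurable
    have h2 : Measurable φ' :=
      (measurable_fderiv_apply_const ℝ v (Pi.single i 1)).comp (measurable_update x)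
    exact (h1.const_mul 2).mul h2
  have key := oneD hw (fun t => sq_nonneg (φ t)) hw'm (x i)
  have hxa : φ (x i) = v x := by rw [hφdef]; simp [Function.update_eq_self]
  calc ENNReal.ofReal ((v x) ^ 2) = ENNReal.ofReal (φ (x i) ^ 2) := by rw [hxa]
    _ ≤ ∫⁻ t, ENNReal.ofReal (φ t ^ 2 + |2 * φ t * φ' t|) := key
    _ ≤ ∫⁻ t, Wfun v (Function.update x i t) := by
        refine lintegral_mono fun t => ENNReal.ofReal_le_ofReal ?_
        have hb : |2 * φ t * φ' t| ≤ 2 * (|φ t| * ‖fderiv ℝ v (Function.update x i t)‖) := by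
          have h1 : |φ' t| ≤ ‖fderiv ℝ v (Function.update x i t)‖ := by
            calc |φ' t| = ‖fderiv ℝ v (Function.update x i t) (Pi.single i 1)‖ := by
                  rw [hφ'def]; simp [Real.norm_eq_abs]
              _ ≤ ‖fderiv ℝ v (Function.update x i t)‖ * ‖(Pi.single i 1 : P3)‖ :=
                  ContinuousLinearMap.le_opNorm _ _
              _ = ‖fderiv ℝ v (Function.update x i t)‖ := by
                  rw [Pi.norm_single]; simp
          calc |2 * φ t * φ' t| = 2 * (|φ t| * |φ' t|) := by
                rw [abs_mul, abs_mul]; simp [abs_of_nonneg, mul_assoc]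
            _ ≤ 2 * (|φ t| * ‖fderiv ℝ v (Function.update x i t)‖) := by
                have := mul_le_mul_of_nonneg_left h1 (abs_nonneg (φ t))
                linarith
        have : φ t ^ 2 = (v (Function.update x i t)) ^ 2 := rfl
        rw [this] at *
        nlinarith [hb]

lemma cube {v : P3 → ℝ} (hv : Differentiable ℝ v) :
    ∫⁻ x, (ENNReal.ofReal |v x|) ^ (3 : ℝ) ≤ (∫⁻ x, Wfun v x) ^ (3 / 2 : ℝ) := by
  classical
  have hmeas := Wfun_measurable hv
  have hcard : (Fintype.card (Fin 3) : ℝ) = 3 := by simp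
  have hp : Real.HolderConjugate (Fintype.card (Fin 3)) (3 / 2) := by
    rw [hcard]; constructor <;> norm_num
  have hgrid := MeasureTheory.lintegral_prod_lintegral_pow_le
    (fun _ : Fin 3 => (volume : Measure ℝ)) hp hmeas
  have hvolpi : (volume : Measure P3) = Measure.pi fun _ => volume := volume_pi
  rw [show (1 : ℝ) / (↑(Fintype.card (Fin 3)) - 1) = 1 / 2 by rw [hcard]; norm_num] at hgrid
  rw [← hvolpi] at hgrid
  have hpoint : ∀ x : P3, (ENNReal.ofReal |v x|) ^ (3 : ℝ) ≤
      ∏ i : Fin 3, (∫⁻ t, Wfun v (Function.update x i t)) ^ ((1 : ℝ) / 2) := by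
    intro x
    have h1 : (ENNReal.ofReal ((v x) ^ 2)) ^ ((1 : ℝ) / 2) = ENNReal.ofReal |v x| := by
      rw [← sq_abs (v x), ENNReal.ofReal_pow (abs_nonneg _), ← ENNReal.rpow_natCast _ 2,
        ← ENNReal.rpow_mul]
      norm_num
    have h2 : ∀ i : Fin 3, (ENNReal.ofReal ((v x) ^ 2)) ^ ((1 : ℝ) / 2) ≤
        (∫⁻ t, Wfun v (Function.update x i t)) ^ ((1 : ℝ) / 2) := fun i =>
      ENNReal.rpow_le_rpow (sliceIneq hv x i) (by norm_num)
    calc (ENNReal.ofReal |v x|) ^ (3 : ℝ)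
        = ∏ _i : Fin 3, (ENNReal.ofReal ((v x) ^ 2)) ^ ((1 : ℝ) / 2) := by
          rw [Finset.prod_const, Finset.card_univ, Fintype.card_fin, h1,
            ← ENNReal.rpow_natCast _ 3]
          norm_num
      _ ≤ ∏ i : Fin 3, (∫⁻ t, Wfun v (Function.update x i t)) ^ ((1 : ℝ) / 2) :=
          Finset.prod_le_prod' fun i _ => h2 i
  calc ∫⁻ x, (ENNReal.ofReal |v x|) ^ (3 : ℝ)
      ≤ ∫⁻ x, ∏ i : Fin 3, (∫⁻ t, Wfun v (Function.update x i t)) ^ ((1 : ℝ) / 2) :=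
        lintegral_mono hpoint
    _ ≤ (∫⁻ x, Wfun v x) ^ (3 / 2 : ℝ) := hgrid

lemma Wbound {v : P3 → ℝ} (hv : Differentiable ℝ v) :
    ∫⁻ x, Wfun v x ≤ (∫⁻ x, (ENNReal.ofReal |v x|) ^ (2 : ℝ)) +
      2 * (∫⁻ x, (ENNReal.ofReal |v x|) ^ (2 : ℝ)) ^ ((1 : ℝ) / 2) *
        (∫⁻ x, (ENNReal.ofReal ‖fderiv ℝ v x‖) ^ (2 : ℝ)) ^ ((1 : ℝ) / 2) := by
  have h1 : Measurable v := hv.continuous.measurable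
  have h2 : Measurable fun y => ‖fderiv ℝ v y‖ := (measurable_fderiv ℝ v).norm
  have hsq : ∀ y : P3, ENNReal.ofReal ((v y) ^ 2) = (ENNReal.ofReal |v y|) ^ (2 : ℝ) := by
    intro y
    rw [← sq_abs (v y), ENNReal.ofReal_pow (abs_nonneg _), ← ENNReal.rpow_natCast _ 2]
    norm_num
  have hW : ∀ y : P3, Wfun v y = (ENNReal.ofReal |v y|) ^ (2 : ℝ) +
      2 * (ENNReal.ofReal |v y| * ENNReal.ofReal ‖fderiv ℝ v y‖) := by
    intro y
    unfold Wfun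
    rw [ENNReal.ofReal_add (sq_nonneg _) (by positivity), hsq y,
      ENNReal.ofReal_mul (by norm_num), ENNReal.ofReal_mul (abs_nonneg _)]
    norm_num
  have hmeas1 : Measurable fun y => (ENNReal.ofReal |v y|) ^ (2 : ℝ) :=
    h1.abs.ennreal_ofReal.pow_const _
  calc ∫⁻ x, Wfun v x
      = (∫⁻ x, (ENNReal.ofReal |v x|) ^ (2 : ℝ)) +
        ∫⁻ x, 2 * (ENNReal.ofReal |v x| * ENNReal.ofReal ‖fderiv ℝ v x‖) := by
        simp_rw [hW]
        exact lintegral_add_left hmeas1 _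
    _ = (∫⁻ x, (ENNReal.ofReal |v x|) ^ (2 : ℝ)) +
        2 * ∫⁻ x, ENNReal.ofReal |v x| * ENNReal.ofReal ‖fderiv ℝ v x‖ := by
        rw [lintegral_const_mul (f := fun x => ENNReal.ofReal |v x| * ENNReal.ofReal ‖fderiv ℝ v x‖) 2 (h1.abs.ennreal_ofReal.mul
          h2.ennreal_ofReal)]
    _ ≤ (∫⁻ x, (ENNReal.ofReal |v x|) ^ (2 : ℝ)) +
        2 * ((∫⁻ x, (ENNReal.ofReal |v x|) ^ (2 : ℝ)) ^ ((1 : ℝ) / 2) *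
          (∫⁻ x, (ENNReal.ofReal ‖fderiv ℝ v x‖) ^ (2 : ℝ)) ^ ((1 : ℝ) / 2)) := by
        gcongr
        have hconj : Real.HolderConjugate 2 2 := by constructor <;> norm_num
        have := ENNReal.lintegral_mul_le_Lp_mul_Lq volume hconj
          h1.abs.ennreal_ofReal.aemeasurable
          h2.ennreal_ofReal.aemeasurable
        simpa using this
    _ = _ := by ring

noncomputable def Ksp : ℝ :=
  ‖(((EuclideanSpace.equiv (Fin 3) ℝ).symm : P3 ≃L[ℝ] E3) : P3 →L[ℝ] E3)‖

lemma Ksp_nonneg : 0 ≤ Ksp := norm_nonneg _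

lemma transfer_lintegral (g : E3 → ℝ≥0∞) (hg : Measurable g) :
    ∫⁻ y : P3, g ((EuclideanSpace.equiv (Fin 3) ℝ).symm y) = ∫⁻ x : E3, g x := by
  have mp := (EuclideanSpace.volume_preserving_symm_measurableEquiv_toLp (Fin 3)).symm
  have hco : ⇑(MeasurableEquiv.toLp 2 (Fin 3 → ℝ)).symm.symm
      = ⇑(EuclideanSpace.equiv (Fin 3) ℝ).symm := rfl
  have := mp.lintegral_comp hg
  rw [hco] at this
  exact this

lemma GN3 {u : E3 → ℝ} (hu1 : Differentiable ℝ u) :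
    ∫⁻ x : E3, (ENNReal.ofReal |u x|) ^ (3 : ℝ) ≤
      ((∫⁻ x : E3, (ENNReal.ofReal |u x|) ^ (2 : ℝ)) +
        2 * (∫⁻ x : E3, (ENNReal.ofReal |u x|) ^ (2 : ℝ)) ^ ((1 : ℝ) / 2) *
          ((ENNReal.ofReal Ksp) ^ (2 : ℝ) *
            ∫⁻ x : E3, (ENNReal.ofReal ‖fderiv ℝ u x‖) ^ (2 : ℝ)) ^ ((1 : ℝ) / 2)) ^
        (3 / 2 : ℝ) := by
  classical
  set e := EuclideanSpace.equiv (Fin 3) ℝ with he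
  set v : P3 → ℝ := fun y => u (e.symm y) with hvdef
  have hv : Differentiable ℝ v := hu1.comp e.symm.differentiable
  have hum : Measurable u := hu1.continuous.measurable
  have hDm : Measurable fun x : E3 => ‖fderiv ℝ u x‖ := (measurable_fderiv ℝ u).norm
  -- transfers
  have hT : ∫⁻ y : P3, (ENNReal.ofReal |v y|) ^ (3 : ℝ)
      = ∫⁻ x : E3, (ENNReal.ofReal |u x|) ^ (3 : ℝ) :=
    transfer_lintegral (fun x => (ENNReal.ofReal |u x|) ^ (3 : ℝ))
      (hum.abs.ennreal_ofReal.pow_const _)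
  have hS : ∫⁻ y : P3, (ENNReal.ofReal |v y|) ^ (2 : ℝ)
      = ∫⁻ x : E3, (ENNReal.ofReal |u x|) ^ (2 : ℝ) :=
    transfer_lintegral (fun x => (ENNReal.ofReal |u x|) ^ (2 : ℝ))
      (hum.abs.ennreal_ofReal.pow_const _)
  -- gradient comparison
  have hgrad : ∀ y : P3, ‖fderiv ℝ v y‖ ≤ Ksp * ‖fderiv ℝ u (e.symm y)‖ := by
    intro y
    have hfd : fderiv ℝ v y = (fderiv ℝ u (e.symm y)).comp
        ((e.symm : P3 ≃L[ℝ] E3) : P3 →L[ℝ] E3) := by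
      rw [show v = u ∘ ⇑e.symm from rfl,
        fderiv_comp y (hu1 _) e.symm.differentiableAt, e.symm.fderiv]
    rw [hfd, mul_comm]
    exact ContinuousLinearMap.opNorm_comp_le _ _
  have hG : ∫⁻ y : P3, (ENNReal.ofReal ‖fderiv ℝ v y‖) ^ (2 : ℝ) ≤
      (ENNReal.ofReal Ksp) ^ (2 : ℝ) *
        ∫⁻ x : E3, (ENNReal.ofReal ‖fderiv ℝ u x‖) ^ (2 : ℝ) := by
    have hpt : ∀ y : P3, (ENNReal.ofReal ‖fderiv ℝ v y‖) ^ (2 : ℝ) ≤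
        (ENNReal.ofReal Ksp) ^ (2 : ℝ) *
          (ENNReal.ofReal ‖fderiv ℝ u (e.symm y)‖) ^ (2 : ℝ) := by
      intro y
      rw [← ENNReal.mul_rpow_of_nonneg _ _ (by norm_num : (0:ℝ) ≤ 2),
        ← ENNReal.ofReal_mul Ksp_nonneg]
      exact ENNReal.rpow_le_rpow (ENNReal.ofReal_le_ofReal (hgrad y)) (by norm_num)
    calc ∫⁻ y : P3, (ENNReal.ofReal ‖fderiv ℝ v y‖) ^ (2 : ℝ)
        ≤ ∫⁻ y : P3, (ENNReal.ofReal Ksp) ^ (2 : ℝ) *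
            (ENNReal.ofReal ‖fderiv ℝ u (e.symm y)‖) ^ (2 : ℝ) := lintegral_mono hpt
      _ = (ENNReal.ofReal Ksp) ^ (2 : ℝ) *
            ∫⁻ y : P3, (ENNReal.ofReal ‖fderiv ℝ u (e.symm y)‖) ^ (2 : ℝ) :=
          lintegral_const_mul' _ _ (by
            exact ENNReal.rpow_ne_top_of_nonneg (by norm_num) ENNReal.ofReal_ne_top)
      _ = (ENNReal.ofReal Ksp) ^ (2 : ℝ) *
            ∫⁻ x : E3, (ENNReal.ofReal ‖fderiv ℝ u x‖) ^ (2 : ℝ) := by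
          rw [transfer_lintegral (fun x => (ENNReal.ofReal ‖fderiv ℝ u x‖) ^ (2 : ℝ))
            (hDm.ennreal_ofReal.pow_const _)]
  calc ∫⁻ x : E3, (ENNReal.ofReal |u x|) ^ (3 : ℝ)
      = ∫⁻ y : P3, (ENNReal.ofReal |v y|) ^ (3 : ℝ) := hT.symm
    _ ≤ (∫⁻ y, Wfun v y) ^ (3 / 2 : ℝ) := cube hv
    _ ≤ _ := by
        refine ENNReal.rpow_le_rpow ?_ (by norm_num)
        refine le_trans (Wbound hv) ?_
        rw [hS]
        gcongr

lemma interp {u : E3 → ℝ} (hum : Measurable u) {p : ℝ} (hp2 : 2 < p) (hp3 : p < 3) :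
    ∫⁻ x : E3, (ENNReal.ofReal |u x|) ^ p ≤
      (∫⁻ x : E3, (ENNReal.ofReal |u x|) ^ (2 : ℝ)) ^ (3 - p) *
        (∫⁻ x : E3, (ENNReal.ofReal |u x|) ^ (3 : ℝ)) ^ (p - 2) := by
  have h3p : (0:ℝ) < 3 - p := by linarith
  have hp2' : (0:ℝ) < p - 2 := by linarith
  have hconj : Real.HolderConjugate (1 / (3 - p)) (1 / (p - 2)) := by
    constructor
    · rw [one_div, one_div, inv_inv, inv_inv]; ring
    · exact one_div_pos.2 h3p
    · exact one_div_pos.2 hp2'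
  set f : E3 → ℝ≥0∞ := fun x => ((ENNReal.ofReal |u x|) ^ (2 : ℝ)) ^ (3 - p) with hf
  set g : E3 → ℝ≥0∞ := fun x => ((ENNReal.ofReal |u x|) ^ (3 : ℝ)) ^ (p - 2) with hg
  have hfm : AEMeasurable f := ((hum.abs.ennreal_ofReal.pow_const _).pow_const _).aemeasurable
  have hgm : AEMeasurable g := ((hum.abs.ennreal_ofReal.pow_const _).pow_const _).aemeasurable
  have hpt : ∀ x, (ENNReal.ofReal |u x|) ^ p = f x * g x := by
    intro x
    rw [hf, hg]
    simp only []
    rw [← ENNReal.rpow_mul, ← ENNReal.rpow_mul,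
      ← ENNReal.rpow_add_of_nonneg _ _ (by nlinarith) (by nlinarith)]
    ring_nf
  have hH := ENNReal.lintegral_mul_le_Lp_mul_Lq (volume : Measure E3) hconj hfm hgm
  have hfa : ∀ x, f x ^ (1 / (3 - p)) = (ENNReal.ofReal |u x|) ^ (2 : ℝ) := by
    intro x
    rw [hf]; simp only []
    rw [← ENNReal.rpow_mul, mul_one_div, div_self h3p.ne', ENNReal.rpow_one]
  have hga : ∀ x, g x ^ (1 / (p - 2)) = (ENNReal.ofReal |u x|) ^ (3 : ℝ) := by
    intro x
    rw [hg]; simp only []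
    rw [← ENNReal.rpow_mul, mul_one_div, div_self hp2'.ne', ENNReal.rpow_one]
  calc ∫⁻ x : E3, (ENNReal.ofReal |u x|) ^ p = ∫⁻ x, f x * g x := by simp_rw [hpt]
    _ ≤ (∫⁻ x, f x ^ (1 / (3 - p))) ^ (1 / (1 / (3 - p))) *
        (∫⁻ x, g x ^ (1 / (p - 2))) ^ (1 / (1 / (p - 2))) := hH
    _ = _ := by
        simp_rw [hfa, hga, one_div_one_div]

lemma Cbound {u : E3 → ℝ} (hu : InH1 u) {p ρ : ℝ} (hp2 : 2 < p) (hp3 : p < 3) (hρ : 0 < ρ)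
    (hmass : (∫ x, (u x) ^ 2) = ρ ^ 2) :
    ∫ x, |u x| ^ p ≤ (ρ ^ 2) ^ (3 - p) *
      (ρ ^ 2 + 2 * ρ * (Ksp * Real.sqrt (∫ x, ‖fderiv ℝ u x‖ ^ 2))) ^ (3 / 2 * (p - 2)) := by
  obtain ⟨hu1, hu2, hu3⟩ := hu
  have hum : Measurable u := hu1.continuous.measurable
  have hDm : Measurable fun x : E3 => ‖fderiv ℝ u x‖ := (measurable_fderiv ℝ u).norm
  set A : ℝ := ∫ x, ‖fderiv ℝ u x‖ ^ 2 with hA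
  have hA0 : 0 ≤ A := integral_nonneg fun x => sq_nonneg _
  set Q : ℝ := ρ ^ 2 + 2 * ρ * (Ksp * Real.sqrt A) with hQ
  have hQ0 : 0 ≤ Q := by
    have := Real.sqrt_nonneg A
    have := Ksp_nonneg
    positivity
  set R : ℝ := (ρ ^ 2) ^ (3 - p) * Q ^ (3 / 2 * (p - 2)) with hR
  have hR0 : 0 ≤ R := mul_nonneg (Real.rpow_nonneg (sq_nonneg ρ) _)
    (Real.rpow_nonneg hQ0 _)
  by_cases hint : Integrable (fun x : E3 => |u x| ^ p) volume
  swap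
  · rw [integral_undef hint]; exact hR0
  -- key identifications
  have hsqpt : ∀ x : E3, ENNReal.ofReal ((u x) ^ 2) = (ENNReal.ofReal |u x|) ^ (2 : ℝ) := by
    intro x
    rw [← sq_abs (u x), ENNReal.ofReal_pow (abs_nonneg _), ← ENNReal.rpow_natCast _ 2]
    norm_num
  have hsqpt' : ∀ x : E3, ENNReal.ofReal (‖fderiv ℝ u x‖ ^ 2)
      = (ENNReal.ofReal ‖fderiv ℝ u x‖) ^ (2 : ℝ) := by
    intro x
    rw [ENNReal.ofReal_pow (norm_nonneg _), ← ENNReal.rpow_natCast _ 2]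
    norm_num
  have hS : ∫⁻ x : E3, (ENNReal.ofReal |u x|) ^ (2 : ℝ) = ENNReal.ofReal (ρ ^ 2) := by
    rw [← hmass, ofReal_integral_eq_lintegral_ofReal hu2.integrable_sq
      (Filter.Eventually.of_forall fun x => sq_nonneg _)]
    simp_rw [hsqpt]
  have hG : ∫⁻ x : E3, (ENNReal.ofReal ‖fderiv ℝ u x‖) ^ (2 : ℝ) = ENNReal.ofReal A := by
    rw [hA, ofReal_integral_eq_lintegral_ofReal hu3.integrable_sq
      (Filter.Eventually.of_forall fun x => sq_nonneg _)]
    simp_rw [hsqpt']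
  -- the ENNReal chain
  have hrho12 : (ENNReal.ofReal (ρ ^ 2)) ^ ((1 : ℝ) / 2) = ENNReal.ofReal ρ := by
    rw [ENNReal.ofReal_rpow_of_nonneg (sq_nonneg ρ) (by norm_num)]
    congr 1
    rw [← Real.rpow_natCast ρ 2, ← Real.rpow_mul hρ.le]
    norm_num
  have hKA : ((ENNReal.ofReal Ksp) ^ (2 : ℝ) * ENNReal.ofReal A) ^ ((1 : ℝ) / 2)
      = ENNReal.ofReal (Ksp * Real.sqrt A) := by
    rw [ENNReal.mul_rpow_of_nonneg _ _ (by norm_num : (0:ℝ) ≤ 1 / 2),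
      ← ENNReal.rpow_mul, ENNReal.ofReal_rpow_of_nonneg hA0 (by norm_num),
      ENNReal.ofReal_mul Ksp_nonneg]
    norm_num
    rw [Real.sqrt_eq_rpow]
  have hQE : ENNReal.ofReal (ρ ^ 2) +
      2 * (ENNReal.ofReal (ρ ^ 2)) ^ ((1 : ℝ) / 2) *
        ((ENNReal.ofReal Ksp) ^ (2 : ℝ) * ENNReal.ofReal A) ^ ((1 : ℝ) / 2)
      = ENNReal.ofReal Q := by
    have hsA := Real.sqrt_nonneg A
    have hKn := Ksp_nonneg
    have h2 : (0:ℝ) ≤ 2 * ρ * (Ksp * Real.sqrt A) := by positivity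
    have h3 : (0:ℝ) ≤ 2 * ρ := by linarith
    rw [hrho12, hKA, hQ, ENNReal.ofReal_add (sq_nonneg ρ) h2, ENNReal.ofReal_mul h3,
      ENNReal.ofReal_mul (by norm_num : (0:ℝ) ≤ 2)]
    norm_num [mul_assoc]
  have hT : ∫⁻ x : E3, (ENNReal.ofReal |u x|) ^ (3 : ℝ)
      ≤ ENNReal.ofReal (Q ^ (3 / 2 : ℝ)) := by
    refine le_trans (GN3 hu1) ?_
    rw [hS, hG, hQE, ENNReal.ofReal_rpow_of_nonneg hQ0 (by norm_num)]
  have hchain : ENNReal.ofReal (∫ x, |u x| ^ p) ≤ ENNReal.ofReal R := by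
    rw [ofReal_integral_eq_lintegral_ofReal hint
      (Filter.Eventually.of_forall fun x => Real.rpow_nonneg (abs_nonneg _) _)]
    have hpt : ∀ x : E3, ENNReal.ofReal (|u x| ^ p) = (ENNReal.ofReal |u x|) ^ p :=
      fun x => (ENNReal.ofReal_rpow_of_nonneg (abs_nonneg _) (by linarith : (0:ℝ) ≤ p)).symm
    calc ∫⁻ x : E3, ENNReal.ofReal (|u x| ^ p)
        = ∫⁻ x : E3, (ENNReal.ofReal |u x|) ^ p := by simp_rw [hpt]
      _ ≤ (∫⁻ x : E3, (ENNReal.ofReal |u x|) ^ (2 : ℝ)) ^ (3 - p) *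
          (∫⁻ x : E3, (ENNReal.ofReal |u x|) ^ (3 : ℝ)) ^ (p - 2) := interp hum hp2 hp3
      _ ≤ (ENNReal.ofReal (ρ ^ 2)) ^ (3 - p) *
          (ENNReal.ofReal (Q ^ (3 / 2 : ℝ))) ^ (p - 2) := by
          rw [hS]
          exact mul_le_mul_right (ENNReal.rpow_le_rpow hT (by linarith)) _
      _ = ENNReal.ofReal R := by
          rw [ENNReal.ofReal_rpow_of_nonneg (sq_nonneg ρ) (by linarith),
            ENNReal.ofReal_rpow_of_nonneg (Real.rpow_nonneg hQ0 _) (by linarith),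
            ← ENNReal.ofReal_mul (Real.rpow_nonneg (sq_nonneg ρ) _), hR,
            ← Real.rpow_mul hQ0]
  rw [ENNReal.ofReal_le_ofReal_iff hR0] at hchain
  exact hchain

lemma scalar (c : ℝ) (hc : 0 ≤ c) :
    ∃ K0 : ℝ, ∀ s : ℝ, 0 ≤ s → c * (1 + s) ^ (3 / 2 : ℝ) ≤ 1 / 4 * s ^ 2 + K0 := by
  refine ⟨64 * c ^ 4 + c + 1, fun s hs => ?_⟩
  set r := Real.sqrt (1 + s) with hr
  have hr2 : r ^ 2 = 1 + s := Real.sq_sqrt (by linarith)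
  have hr0 : 0 ≤ r := Real.sqrt_nonneg _
  have hr1 : 1 ≤ r := by nlinarith [sq_nonneg (r - 1), sq_nonneg (r + 1)]
  have h32 : (1 + s) ^ (3 / 2 : ℝ) = r ^ 3 := by
    rw [← hr2, ← Real.rpow_natCast r 2, ← Real.rpow_mul hr0, ← Real.rpow_natCast r 3]
    norm_num
  rw [h32]
  nlinarith [sq_nonneg (r ^ 2 / 4 - 2 * c * r), sq_nonneg (r ^ 2 / 4 - 8 * c ^ 2),
    sq_nonneg (r ^ 2 - 2), mul_nonneg hc hr0, sq_nonneg r, sq_nonneg c]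

lemma massage {p ρ Ks : ℝ} (hp2 : 2 < p) (hp3 : p < 3) (hρ : 0 < ρ) (hKs : 0 ≤ Ks)
    {A : ℝ} (hA : 0 ≤ A) :
    (ρ ^ 2) ^ (3 - p) * (ρ ^ 2 + 2 * ρ * (Ks * Real.sqrt A)) ^ (3 / 2 * (p - 2)) ≤
      ((ρ ^ 2) ^ (3 - p) * (ρ ^ 2 + 2 * ρ * Ks) ^ (3 / 2 * (p - 2))) *
        (1 + Real.sqrt A) ^ (3 / 2 : ℝ) := by
  set s := Real.sqrt A with hs
  have hs0 : 0 ≤ s := Real.sqrt_nonneg _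
  set M : ℝ := ρ ^ 2 + 2 * ρ * Ks with hM
  have hM0 : 0 < M := by positivity
  have hβ0 : (0:ℝ) ≤ 3 / 2 * (p - 2) := by nlinarith
  have hβ32 : 3 / 2 * (p - 2) ≤ (3 / 2 : ℝ) := by nlinarith
  have h1 : ρ ^ 2 + 2 * ρ * (Ks * s) ≤ M * (1 + s) := by
    rw [hM]; nlinarith [mul_nonneg (mul_nonneg hρ.le hKs) hs0, sq_nonneg ρ]
  have hbase0 : (0:ℝ) ≤ ρ ^ 2 + 2 * ρ * (Ks * s) := by positivity
  have h2 : (ρ ^ 2 + 2 * ρ * (Ks * s)) ^ (3 / 2 * (p - 2)) ≤ (M * (1 + s)) ^ (3 / 2 * (p - 2)) :=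
    Real.rpow_le_rpow hbase0 h1 hβ0
  have h3 : (M * (1 + s)) ^ (3 / 2 * (p - 2)) = M ^ (3 / 2 * (p - 2)) * (1 + s) ^ (3 / 2 * (p - 2)) :=
    Real.mul_rpow hM0.le (by linarith)
  have h4 : (1 + s) ^ (3 / 2 * (p - 2)) ≤ (1 + s) ^ (3 / 2 : ℝ) :=
    Real.rpow_le_rpow_of_exponent_le (by linarith) hβ32
  have h5 : (ρ ^ 2 + 2 * ρ * (Ks * s)) ^ (3 / 2 * (p - 2)) ≤
      M ^ (3 / 2 * (p - 2)) * (1 + s) ^ (3 / 2 : ℝ) := by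
    refine le_trans h2 ?_
    rw [h3]
    exact mul_le_mul_of_nonneg_left h4 (Real.rpow_nonneg hM0.le _)
  calc (ρ ^ 2) ^ (3 - p) * (ρ ^ 2 + 2 * ρ * (Ks * s)) ^ (3 / 2 * (p - 2))
      ≤ (ρ ^ 2) ^ (3 - p) * (M ^ (3 / 2 * (p - 2)) * (1 + s) ^ (3 / 2 : ℝ)) :=
        mul_le_mul_of_nonneg_left h5 (Real.rpow_nonneg (sq_nonneg ρ) _)
    _ = _ := by ring

end SP7aux

theorem key_lower {p ρ : ℝ} (hp2 : 2 < p) (hp3 : p < 3) (hρ : 0 < ρ) :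
    ∃ K0 : ℝ, ∀ u : E3 → ℝ, InH1 u → (∫ x, (u x) ^ 2) = ρ ^ 2 →
      1 / 4 * (∫ x, ‖fderiv ℝ u x‖ ^ 2) - K0 ≤ Ifull p u := by
  set c0 : ℝ := (ρ ^ 2) ^ (3 - p) * (ρ ^ 2 + 2 * ρ * SP7aux.Ksp) ^ (3 / 2 * (p - 2)) with hc0
  have hp0 : (0:ℝ) < p := by linarith
  have hc00 : 0 ≤ c0 := by
    have := SP7aux.Ksp_nonneg
    have h1 : (0:ℝ) ≤ ρ ^ 2 + 2 * ρ * SP7aux.Ksp := by positivity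
    exact mul_nonneg (Real.rpow_nonneg (sq_nonneg ρ) _) (Real.rpow_nonneg h1 _)
  obtain ⟨K0, hK0⟩ := SP7aux.scalar (1 / p * c0) (by positivity)
  refine ⟨K0, fun u hu hmass => ?_⟩
  set A : ℝ := ∫ x, ‖fderiv ℝ u x‖ ^ 2 with hA
  have hA0 : 0 ≤ A := integral_nonneg fun x => sq_nonneg _
  set s : ℝ := Real.sqrt A with hs
  have hs0 : 0 ≤ s := Real.sqrt_nonneg _
  have hs2 : s ^ 2 = A := Real.sq_sqrt hA0
  have hB : 0 ≤ ∫ x : E3, ∫ y : E3, (4 * π * ‖x - y‖)⁻¹ * (u x) ^ 2 * (u y) ^ 2 := by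
    refine integral_nonneg fun x => integral_nonneg fun y => ?_
    have h1 : (0:ℝ) ≤ (4 * π * ‖x - y‖)⁻¹ := by positivity
    positivity
  have hC : ∫ x, |u x| ^ p ≤ c0 * (1 + s) ^ (3 / 2 : ℝ) := by
    refine le_trans (SP7aux.Cbound hu hp2 hp3 hρ hmass) ?_
    have := SP7aux.massage hp2 hp3 hρ SP7aux.Ksp_nonneg hA0
    rw [hc0]
    exact this
  have hscal := hK0 s hs0
  rw [hs2] at hscal
  have hCp : 1 / p * (∫ x, |u x| ^ p) ≤ 1 / 4 * A + K0 := by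
    have h1 : 1 / p * (∫ x, |u x| ^ p) ≤ 1 / p * (c0 * (1 + s) ^ (3 / 2 : ℝ)) := by
      have : (0:ℝ) ≤ 1 / p := by positivity
      exact mul_le_mul_of_nonneg_left hC this
    calc 1 / p * (∫ x, |u x| ^ p) ≤ 1 / p * c0 * (1 + s) ^ (3 / 2 : ℝ) := by
          rw [mul_assoc]; exact h1
      _ ≤ 1 / 4 * A + K0 := hscal
  unfold Ifull
  rw [← hA]
  linarith

theorem stmt7' (p ρ : ℝ) (hp : 2 < p ∧ p < 3) (hρ : 0 < ρ) :
    ∃ m : ℝ,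
      (∀ u : E3 → ℝ, InH1 u → (∫ x, (u x) ^ 2) = ρ ^ 2 → m ≤ Ifull p u) ∧
      (∀ U : ℕ → E3 → ℝ,
        (∀ n, InH1 (U n) ∧ (∫ x, (U n x) ^ 2) = ρ ^ 2) →
        Tendsto (fun n => (∫ x, ‖fderiv ℝ (U n) x‖ ^ 2) + ∫ x, (U n x) ^ 2)
          atTop atTop →
        Tendsto (fun n => Ifull p (U n)) atTop atTop) := by
  obtain ⟨K0, hK0⟩ := key_lower hp.1 hp.2 hρ
  refine ⟨-K0, fun u hu hmass => ?_, fun U hU hT => ?_⟩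
  · have h1 := hK0 u hu hmass
    have h2 : 0 ≤ ∫ x, ‖fderiv ℝ u x‖ ^ 2 := integral_nonneg fun x => sq_nonneg _
    linarith
  · have hmassn : ∀ n, (∫ x, (U n x) ^ 2) = ρ ^ 2 := fun n => (hU n).2
    have hTA : Tendsto (fun n => ∫ x, ‖fderiv ℝ (U n) x‖ ^ 2) atTop atTop := by
      have : (fun n => ∫ x, ‖fderiv ℝ (U n) x‖ ^ 2) =
          fun n => ((∫ x, ‖fderiv ℝ (U n) x‖ ^ 2) + ∫ x, (U n x) ^ 2) + (-ρ ^ 2) := by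
        funext n; rw [hmassn n]; ring
      rw [this]
      exact tendsto_atTop_add_const_right _ _ hT
    have hlow : Tendsto (fun n => 1 / 4 * (∫ x, ‖fderiv ℝ (U n) x‖ ^ 2) - K0) atTop atTop := by
      refine tendsto_atTop_add_const_right _ (-K0) ?_
      exact hTA.const_mul_atTop (by norm_num)
    refine tendsto_atTop_mono (fun n => ?_) hlow
    exact hK0 (U n) (hU n).1 (hmassn n)

/-- For `p ∈ (2,3)` and `ρ > 0`, the functional `I` is bounded from below and
coercive on `M_ρ = {u ∈ H¹(ℝ³) : ∫ u² = ρ²}`. -/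
theorem stmt7 (p ρ : ℝ) (hp : 2 < p ∧ p < 3) (hρ : 0 < ρ) :
    ∃ m : ℝ,
      (∀ u : E3 → ℝ, InH1 u → (∫ x, (u x) ^ 2) = ρ ^ 2 → m ≤ Ifull p u) ∧
      (∀ U : ℕ → E3 → ℝ,
        (∀ n, InH1 (U n) ∧ (∫ x, (U n x) ^ 2) = ρ ^ 2) →
        Tendsto (fun n => (∫ x, ‖fderiv ℝ (U n) x‖ ^ 2) + ∫ x, (U n x) ^ 2)
          atTop atTop →
        Tendsto (fun n => Ifull p (U n)) atTop atTop) := by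
  exact stmt7' p ρ hp hρ
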